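/- arXiv:1805.01341 — 2 statements merged into one kernel-verified Lean document; each statement's English description precedes it below -/
import Mathlib

section
/- Define Δ¹h(k,ℓ) = h(k+1,ℓ) - h(k,ℓ) where h(k,ℓ) = f(k)P(X_ℓ=k) - P(X_ℓ ≥ k+1). Then for all ℓ ≥ 1 and k ≤ ℓ-1: Δ¹h(k,ℓ+1) = ((ℓ - f(k+1))/(ℓ+1)) Δ¹h(k,ℓ) + (f(k)/(ℓ+1)) Δ¹h(k-1,ℓ). -/
open Finset

/-- `ChainLaw f p` says that `p ℓ k = P(X_ℓ = k)` is the law of the Markov chain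
`(X_ℓ)_{ℓ ≥ 1}` with `X_1 = 0` and time-inhomogeneous transitions: from state
`i` at time `n`, move to `i+1` with probability `f i/(n+1)`, return to `0` with
probability `1/(n+1)` if `i ≥ 1` (so that it stays at `i` with probability
`(n - f i)/(n+1)`), and, from `i = 0`, move to `1` with probability `f 0/(n+1)`
and stay at `0` otherwise.  (The chain has total mass one, so the probability
of being at `0` at time `n+1` is
`p n 0 (n+1-f 0)/(n+1) + (∑_{i ≥ 1} p n i)/(n+1) = p n 0 (n+1-f 0)/(n+1) + (1 - p n 0)/(n+1)`.) -/
def ChainLaw (f : ℕ → ℝ) (p : ℕ → ℕ → ℝ) : Prop :=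
  (∀ k, p 1 k = if k = 0 then 1 else 0) ∧
  (∀ n, 1 ≤ n →
    p (n + 1) 0 = p n 0 * (((n : ℝ) + 1 - f 0) / ((n : ℝ) + 1))
      + (1 - p n 0) * (1 / ((n : ℝ) + 1))) ∧
  (∀ n, 1 ≤ n → ∀ j, 1 ≤ j →
    p (n + 1) j = p n (j - 1) * (f (j - 1) / ((n : ℝ) + 1))
      + p n j * (((n : ℝ) - f j) / ((n : ℝ) + 1)))

/-- `Hk f p k ℓ = f k P(X_ℓ = k) - P(X_ℓ ≥ k+1)`; since `X_ℓ ≤ ℓ - 1` a.s.,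
`P(X_ℓ ≥ k+1) = ∑_{j=k+1}^{ℓ-1} p ℓ j`. -/
def Hk (f : ℕ → ℝ) (p : ℕ → ℕ → ℝ) (k ℓ : ℕ) : ℝ :=
  f k * p ℓ k - ∑ j ∈ Finset.Ico (k + 1) ℓ, p ℓ j

/-- The increment `Δ¹h(k,ℓ) = h(k+1,ℓ) - h(k,ℓ)`. -/
def DHk (f : ℕ → ℝ) (p : ℕ → ℕ → ℝ) (k ℓ : ℕ) : ℝ :=
  Hk f p (k + 1) ℓ - Hk f p k ℓ

section Aux

variable (f : ℕ → ℝ) (p : ℕ → ℕ → ℝ) (hp : ChainLaw f p)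

lemma psupp (hp : ChainLaw f p) : ∀ n, 1 ≤ n → ∀ j, n ≤ j → p n j = 0 := by
  intro n hn
  induction n with
  | zero => omega
  | succ m ih =>
    intro j hj
    rcases Nat.eq_or_lt_of_le hn with h1 | h1
    · have : m = 0 := by omega
      subst this
      rw [hp.1 j, if_neg (by omega)]
    · have hm : 1 ≤ m := by omega
      have hj1 : 1 ≤ j := by omega
      rw [hp.2.2 m hm j hj1, ih hm (j-1) (by omega), ih hm j (by omega)]
      ring

lemma key (hp : ChainLaw f p) : ∀ ℓ, 1 ≤ ℓ → ∀ k, k ≤ ℓ →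
    ∑ j ∈ Finset.Ico (k+1) (ℓ+1), p (ℓ+1) j
      = (f k * p ℓ k + (ℓ:ℝ) * ∑ j ∈ Finset.Ico (k+1) ℓ, p ℓ j) / ((ℓ:ℝ)+1) := by
  intro ℓ hℓ k hk
  have hℓ0 : ((ℓ:ℝ)+1) ≠ 0 := by positivity
  rcases Nat.eq_or_lt_of_le hk with h1 | h1
  · subst h1
    rw [Finset.Ico_eq_empty (by omega : ¬ k+1 < k), Finset.Ico_self,
      psupp f p hp k hℓ k le_rfl]
    simp
  · have step : ∑ j ∈ Finset.Ico (k+1) (ℓ+1), p (ℓ+1) j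
        = ∑ j ∈ Finset.Ico (k+1) (ℓ+1),
            (p ℓ (j-1) * (f (j-1) / ((ℓ:ℝ)+1)) + p ℓ j * (((ℓ:ℝ) - f j) / ((ℓ:ℝ)+1))) := by
      refine Finset.sum_congr rfl fun j hj => ?_
      have hj1 : 1 ≤ j := by simp [Finset.mem_Ico] at hj; omega
      exact hp.2.2 ℓ hℓ j hj1
    rw [step, Finset.sum_add_distrib]
    have reidx : ∑ j ∈ Finset.Ico (k+1) (ℓ+1), p ℓ (j-1) * (f (j-1) / ((ℓ:ℝ)+1))
        = ∑ j ∈ Finset.Ico k ℓ, p ℓ j * (f j / ((ℓ:ℝ)+1)) := by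
      rw [Finset.sum_Ico_eq_sum_range, Finset.sum_Ico_eq_sum_range]
      have : ℓ + 1 - (k+1) = ℓ - k := by omega
      rw [this]
      refine Finset.sum_congr rfl fun i _ => ?_
      have : k + 1 + i - 1 = k + i := by omega
      rw [this]
    rw [reidx, Finset.sum_eq_sum_Ico_succ_bot h1,
      Finset.sum_Ico_succ_top (by omega : k+1 ≤ ℓ),
      psupp f p hp ℓ hℓ ℓ le_rfl]
    have comb : ∑ j ∈ Finset.Ico (k+1) ℓ, p ℓ j * (f j / ((ℓ:ℝ)+1))
        + ∑ j ∈ Finset.Ico (k+1) ℓ, p ℓ j * (((ℓ:ℝ) - f j) / ((ℓ:ℝ)+1))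
        = (∑ j ∈ Finset.Ico (k+1) ℓ, p ℓ j) * ((ℓ:ℝ) / ((ℓ:ℝ)+1)) := by
      rw [Finset.sum_mul, ← Finset.sum_add_distrib]
      refine Finset.sum_congr rfl fun j _ => ?_
      field_simp
      ring
    rw [zero_mul, add_zero, add_assoc, comb]
    field_simp

lemma ptotal (hp : ChainLaw f p) : ∀ n, 1 ≤ n → ∑ j ∈ Finset.range n, p n j = 1 := by
  intro n hn
  induction n with
  | zero => omega
  | succ m ih =>
    rcases Nat.eq_or_lt_of_le hn with h1 | h1
    · have : m = 0 := by omega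
      subst this
      simp [hp.1]
    · have hm : 1 ≤ m := by omega
      have hm0 : ((m:ℝ)+1) ≠ 0 := by positivity
      have hsplit : ∑ j ∈ Finset.range (m+1), p (m+1) j
          = p (m+1) 0 + ∑ j ∈ Finset.Ico 1 (m+1), p (m+1) j := by
        rw [Finset.range_eq_Ico, Finset.sum_eq_sum_Ico_succ_bot (by omega)]
      have hIco : ∑ j ∈ Finset.Ico 1 m, p m j = 1 - p m 0 := by
        have := ih hm
        rw [Finset.range_eq_Ico, Finset.sum_eq_sum_Ico_succ_bot (by omega)] at this
        linarith
      rw [hsplit, hp.2.1 m hm, key f p hp m hm 0 (by omega), hIco]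
      field_simp
      ring

lemma hrec1 (hp : ChainLaw f p) : ∀ ℓ, 1 ≤ ℓ → ∀ k, 1 ≤ k → k ≤ ℓ →
    Hk f p k (ℓ+1) = (((ℓ:ℝ) - f k)/((ℓ:ℝ)+1)) * Hk f p k ℓ
      + (f k/((ℓ:ℝ)+1)) * Hk f p (k-1) ℓ := by
  intro ℓ hℓ k hk hkl
  have hℓ0 : ((ℓ:ℝ)+1) ≠ 0 := by positivity
  have hsplit : ∑ j ∈ Finset.Ico k ℓ, p ℓ j
      = p ℓ k + ∑ j ∈ Finset.Ico (k+1) ℓ, p ℓ j := by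
    rcases Nat.eq_or_lt_of_le hkl with h1 | h1
    · subst h1
      rw [Finset.Ico_self, Finset.Ico_eq_empty (by omega : ¬ k+1 < k),
        psupp f p hp k hℓ k le_rfl]
      simp
    · rw [Finset.sum_eq_sum_Ico_succ_bot h1]
  have hk1 : k - 1 + 1 = k := by omega
  unfold Hk
  rw [hp.2.2 ℓ hℓ k hk, key f p hp ℓ hℓ k hkl, hk1, hsplit]
  field_simp
  ring

lemma hrec0 (hp : ChainLaw f p) : ∀ ℓ, 1 ≤ ℓ →
    Hk f p 0 (ℓ+1) = (((ℓ:ℝ) - f 0)/((ℓ:ℝ)+1)) * Hk f p 0 ℓ := by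
  intro ℓ hℓ
  have hℓ0 : ((ℓ:ℝ)+1) ≠ 0 := by positivity
  have hIco : ∑ j ∈ Finset.Ico 1 ℓ, p ℓ j = 1 - p ℓ 0 := by
    have := ptotal f p hp ℓ hℓ
    rw [Finset.range_eq_Ico, Finset.sum_eq_sum_Ico_succ_bot (by omega)] at this
    linarith
  unfold Hk
  rw [hp.2.1 ℓ hℓ, key f p hp ℓ hℓ 0 (by omega), hIco]
  field_simp
  ring

end Aux

/-- for all `ℓ ≥ 1` and `k ≤ ℓ - 1`,
`Δ¹h(k,ℓ+1) = ((ℓ - f(k+1))/(ℓ+1)) Δ¹h(k,ℓ) + (f k/(ℓ+1)) Δ¹h(k-1,ℓ)`,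
where `Δ¹h(-1,ℓ) = h(0,ℓ) - h(-1,ℓ) = h(0,ℓ)` by the convention `h(-1,ℓ) = 0`. -/
theorem DHk_recursion (f : ℕ → ℝ) (hfpos : ∀ k, 0 < f k)
    (hfle : ∀ k, f k ≤ (k : ℝ) + 1) (p : ℕ → ℕ → ℝ) (hp : ChainLaw f p) :
    ∀ ℓ, 1 ≤ ℓ → ∀ k, k ≤ ℓ - 1 →
      DHk f p k (ℓ + 1)
        = (((ℓ : ℝ) - f (k + 1)) / ((ℓ : ℝ) + 1)) * DHk f p k ℓ
          + (f k / ((ℓ : ℝ) + 1)) *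
              (if k = 0 then Hk f p 0 ℓ else DHk f p (k - 1) ℓ) := by
  intro ℓ hℓ k hk
  have hkl : k < ℓ := by omega
  by_cases h0 : k = 0
  · subst h0
    rw [if_pos rfl]
    unfold DHk
    rw [show (0:ℕ)+1 = 1 from rfl, hrec1 f p hp ℓ hℓ 1 le_rfl (by omega),
      hrec0 f p hp ℓ hℓ]
    norm_num
    have hℓ0 : ((ℓ:ℝ)+1) ≠ 0 := by positivity
    field_simp
    ring
  · rw [if_neg h0]
    have hk1 : 1 ≤ k := by omega
    have e : k - 1 + 1 = k := by omega
    unfold DHk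
    rw [e, hrec1 f p hp ℓ hℓ (k+1) (by omega) (by omega),
      hrec1 f p hp ℓ hℓ k hk1 (by omega)]
    rw [show k + 1 - 1 = k from by omega]
    have hℓ0 : ((ℓ:ℝ)+1) ≠ 0 := by positivity
    field_simp
    ring
end

section
/- If f(k) ∈ [k, k+γ] for all k ∈ ℕ₀ for some γ ∈ (0,1), then sup_{k∈ℕ₀} h(k,ℓ) = h(ℓ-1,ℓ) ≤ (1/Γ(γ))·Γ(ℓ+γ)/Γ(ℓ+1) for every ℓ ≥ 1, and consequently sup_k h(k,ℓ) ≤ C ℓ^{γ-1} for some constant C > 0 and all ℓ ≥ 1. -/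
open Finset

section AuxLemmas

variable {f : ℕ → ℝ} {p : ℕ → ℕ → ℝ} {γ : ℝ}

lemma ChainLaw.p_eq_zero (hp : ChainLaw f p) : ∀ n, 1 ≤ n → ∀ k, n ≤ k → p n k = 0 := by
  intro n
  induction n with
  | zero => omega
  | succ n ih =>
    intro _ k hk
    rcases Nat.eq_zero_or_pos n with hn | hn
    · subst hn
      rw [hp.1 k, if_neg (by omega)]
    · rw [hp.2.2 n hn k (by omega), ih hn (k-1) (by omega), ih hn k (by omega)]
      ring

lemma ChainLaw.Hk_eq_zero (hp : ChainLaw f p) {n k : ℕ} (hn : 1 ≤ n) (hk : n ≤ k) :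
    Hk f p k n = 0 := by
  rw [Hk, hp.p_eq_zero n hn k hk, Finset.Ico_eq_empty (by omega), sum_empty]
  ring

lemma ChainLaw.mass (hp : ChainLaw f p) : ∀ n, 1 ≤ n → ∑ j ∈ range n, p n j = 1 := by
  intro n
  induction n with
  | zero => omega
  | succ n ih =>
    intro _
    rcases Nat.eq_zero_or_pos n with hn | hn
    · subst hn
      simp [hp.1 0]
    have hn1 : ((n:ℝ) + 1) ≠ 0 := by positivity
    have ihm : ∑ j ∈ range n, p n j = 1 := ih hn
    rw [Finset.range_eq_Ico, Finset.sum_eq_sum_Ico_succ_bot (by omega) (p (n+1))]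
    have h1 : ∑ j ∈ Ico 1 (n+1), p (n+1) j
        = (∑ j ∈ Ico 1 (n+1), p n (j-1) * f (j-1)
          + ∑ j ∈ Ico 1 (n+1), p n j * ((n:ℝ) - f j)) / ((n:ℝ)+1) := by
      have : ∀ j ∈ Ico 1 (n+1), p (n+1) j
          = p n (j-1) * f (j-1) / ((n:ℝ)+1) + p n j * ((n:ℝ) - f j) / ((n:ℝ)+1) := by
        intro j hj
        rw [hp.2.2 n hn j (mem_Ico.mp hj).1]; ring
      rw [Finset.sum_congr rfl this, Finset.sum_add_distrib, ← Finset.sum_div,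
        ← Finset.sum_div, add_div]
    have h2 : ∑ j ∈ Ico 1 (n+1), p n (j-1) * f (j-1) = ∑ j ∈ range n, p n j * f j := by
      rw [Finset.sum_Ico_eq_sum_range]
      simp
    have h3 : ∑ j ∈ Ico 1 (n+1), p n j * ((n:ℝ) - f j)
        = ∑ j ∈ Ico 1 n, p n j * ((n:ℝ) - f j) := by
      refine (Finset.sum_subset (Finset.Ico_subset_Ico le_rfl (by omega)) ?_).symm
      intro j hj hj'
      have : n ≤ j := by
        simp only [mem_Ico] at hj hj' ⊢; omega
      rw [hp.p_eq_zero n hn j this]; ring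
    have h4 : ∑ j ∈ range n, p n j * ((n:ℝ) - f j)
        = p n 0 * ((n:ℝ) - f 0) + ∑ j ∈ Ico 1 n, p n j * ((n:ℝ) - f j) := by
      rw [Finset.range_eq_Ico, Finset.sum_eq_sum_Ico_succ_bot hn]
    have h5 : ∑ j ∈ range n, p n j * f j + ∑ j ∈ range n, p n j * ((n:ℝ) - f j)
        = (n:ℝ) := by
      rw [← Finset.sum_add_distrib]
      have : ∀ j ∈ range n, p n j * f j + p n j * ((n:ℝ) - f j) = (n:ℝ) * p n j := by
        intro j _; ring
      rw [Finset.sum_congr rfl this, ← Finset.mul_sum, ihm, mul_one]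
    rw [h1, h2, h3, hp.2.1 n hn]
    have h6 : ∑ j ∈ Ico 1 n, p n j * ((n:ℝ) - f j)
        = (n:ℝ) - ∑ j ∈ range n, p n j * f j - p n 0 * ((n:ℝ) - f 0) := by
      linarith [h5, h4]
    rw [h6]
    field_simp
    ring

lemma shift_sum (g : ℕ → ℝ) (k n : ℕ) :
    ∑ j ∈ Ico (k+1) (n+1), g (j-1) = ∑ j ∈ Ico k n, g j := by
  rw [Finset.sum_Ico_eq_sum_range, Finset.sum_Ico_eq_sum_range]
  have h : n + 1 - (k + 1) = n - k := by omega
  rw [h]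
  exact Finset.sum_congr rfl fun i _ => by congr 1; omega

lemma ChainLaw.Hk_rec (hp : ChainLaw f p) {n k : ℕ} (hn : 1 ≤ n) (hk : 1 ≤ k) :
    Hk f p k (n+1) = (f k * Hk f p (k-1) n + ((n:ℝ) - f k) * Hk f p k n) / ((n:ℝ)+1) := by
  have hn1 : ((n:ℝ) + 1) ≠ 0 := by positivity
  have hA : p (n+1) k = (p n (k-1) * f (k-1) + p n k * ((n:ℝ) - f k)) / ((n:ℝ)+1) := by
    rw [hp.2.2 n hn k hk]; ring
  have hB : ∑ j ∈ Ico (k+1) (n+1), p (n+1) j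
      = (∑ j ∈ Ico k n, p n j * f j + ∑ j ∈ Ico (k+1) n, p n j * ((n:ℝ) - f j))
        / ((n:ℝ)+1) := by
    have e1 : ∀ j ∈ Ico (k+1) (n+1), p (n+1) j
        = p n (j-1) * f (j-1) / ((n:ℝ)+1) + p n j * ((n:ℝ) - f j) / ((n:ℝ)+1) := by
      intro j hj
      rw [hp.2.2 n hn j (by have := (mem_Ico.mp hj).1; omega)]; ring
    rw [Finset.sum_congr rfl e1, Finset.sum_add_distrib, ← Finset.sum_div,
      ← Finset.sum_div, add_div]
    congr 1
    · rw [shift_sum (fun j => p n j * f j) k n]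
    · congr 1
      refine (Finset.sum_subset (Finset.Ico_subset_Ico le_rfl (by omega)) ?_).symm
      intro j hj hj'
      have : n ≤ j := by simp only [mem_Ico] at hj hj'; omega
      rw [hp.p_eq_zero n hn j this]; ring
  have hE : ∑ j ∈ Ico k n, p n j * f j + ∑ j ∈ Ico (k+1) n, p n j * ((n:ℝ) - f j)
      = f k * ∑ j ∈ Ico k n, p n j + ((n:ℝ) - f k) * ∑ j ∈ Ico (k+1) n, p n j := by
    rcases lt_or_ge k n with hkn | hkn
    · rw [Finset.sum_eq_sum_Ico_succ_bot hkn, Finset.sum_eq_sum_Ico_succ_bot hkn (p n)]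
      have c1 : ∑ j ∈ Ico (k+1) n, p n j * f j + ∑ j ∈ Ico (k+1) n, p n j * ((n:ℝ) - f j)
          = (n:ℝ) * ∑ j ∈ Ico (k+1) n, p n j := by
        rw [← Finset.sum_add_distrib, Finset.mul_sum]
        exact Finset.sum_congr rfl fun j _ => by ring
      linear_combination c1
    · rw [Finset.Ico_eq_empty (by omega), Finset.Ico_eq_empty (by omega)]
      simp
  simp only [Hk]
  rw [hA, hB]
  field_simp
  rw [Nat.sub_add_cancel hk]
  linear_combination -hE

lemma ChainLaw.tail_eq (hp : ChainLaw f p) (n : ℕ) (hn : 1 ≤ n) :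
    ∑ j ∈ Ico 1 n, p n j = 1 - p n 0 := by
  have := hp.mass n hn
  rw [Finset.range_eq_Ico, Finset.sum_eq_sum_Ico_succ_bot hn (p n)] at this
  linarith

lemma ChainLaw.Hk_zero_rec (hp : ChainLaw f p) {n : ℕ} (hn : 1 ≤ n) :
    Hk f p 0 (n+1) = (((n:ℝ) - f 0) / ((n:ℝ)+1)) * Hk f p 0 n := by
  have hn1 : ((n:ℝ) + 1) ≠ 0 := by positivity
  simp only [Hk, zero_add]
  rw [hp.tail_eq n hn, hp.tail_eq (n+1) (by omega), hp.2.1 n hn]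
  field_simp
  ring

lemma ChainLaw.Hk_one (hp : ChainLaw f p) (k : ℕ) :
    Hk f p k 1 = if k = 0 then f 0 else 0 := by
  rw [Hk, Finset.Ico_eq_empty (by omega), sum_empty, hp.1 k]
  split <;> simp_all

lemma ChainLaw.invariant (hp : ChainLaw f p) (hfpos : ∀ k, 0 < f k)
    (hγ0 : 0 < γ) (hγ1 : γ < 1)
    (hf : ∀ k : ℕ, (k : ℝ) ≤ f k ∧ f k ≤ (k : ℝ) + γ) : ∀ ℓ, 1 ≤ ℓ →
    (∀ k, 0 ≤ Hk f p k ℓ) ∧ (∀ k, k + 2 ≤ ℓ → Hk f p k ℓ ≤ Hk f p (k+1) ℓ) := by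
  intro ℓ
  induction ℓ with
  | zero => omega
  | succ ℓ ih =>
    intro _
    rcases Nat.eq_zero_or_pos ℓ with h0 | hℓ
    · subst h0
      constructor
      · intro k
        rw [hp.Hk_one k]
        split
        · exact (hfpos 0).le
        · exact le_rfl
      · intro k hk; omega
    obtain ⟨ihn, ihm⟩ := ih hℓ
    have hℓ1 : (0:ℝ) < (ℓ:ℝ) + 1 := by positivity
    have hℓR : (1:ℝ) ≤ (ℓ:ℝ) := by exact_mod_cast hℓ
    have hf0 : f 0 ≤ γ := by simpa using (hf 0).2
    have hnonneg : ∀ k, 0 ≤ Hk f p k (ℓ+1) := by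
      intro k
      rcases Nat.eq_zero_or_pos k with rfl | hk
      · rw [hp.Hk_zero_rec hℓ]
        apply mul_nonneg (div_nonneg (by linarith) hℓ1.le) (ihn 0)
      rcases le_or_gt k ℓ with hkℓ | hkℓ
      · rw [hp.Hk_rec hℓ hk]
        apply div_nonneg _ hℓ1.le
        apply add_nonneg (mul_nonneg (hfpos k).le (ihn (k-1)))
        rcases eq_or_lt_of_le hkℓ with rfl | hlt
        · rw [hp.Hk_eq_zero hℓ le_rfl, mul_zero]
        · apply mul_nonneg _ (ihn k)
          have h4 : f k ≤ (k:ℝ) + γ := (hf k).2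
          have hc : (k:ℝ) + 1 ≤ (ℓ:ℝ) := by exact_mod_cast hlt
          linarith
      · rw [hp.Hk_eq_zero (by omega) (by omega)]
    refine ⟨hnonneg, ?_⟩
    intro k hk2
    have hkℓ : k + 1 ≤ ℓ := by omega
    rcases Nat.eq_zero_or_pos k with rfl | hk
    · -- k = 0 case
      rw [hp.Hk_zero_rec hℓ, hp.Hk_rec hℓ le_rfl]
      rw [div_mul_eq_mul_div, div_le_div_iff₀ hℓ1 hℓ1]
      have key : ((ℓ:ℝ) - f 1) * Hk f p 0 ℓ ≤ ((ℓ:ℝ) - f 1) * Hk f p 1 ℓ := by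
        rcases eq_or_lt_of_le hkℓ with h1 | h1
        · rw [hp.Hk_eq_zero (k := 1) hℓ (by omega), mul_zero]
          apply mul_nonpos_of_nonpos_of_nonneg _ (ihn 0)
          have h2 : (1:ℝ) ≤ f 1 := by simpa using (hf 1).1
          have h3 : (ℓ:ℝ) = 1 := by exact_mod_cast h1.symm
          linarith
        · apply mul_le_mul_of_nonneg_left (ihm 0 (by omega))
          have h2 : f 1 ≤ (1:ℝ) + γ := by simpa using (hf 1).2
          have h3 : (2:ℝ) ≤ (ℓ:ℝ) := by exact_mod_cast h1
          linarith
      have h0le : 0 ≤ Hk f p 0 ℓ := ihn 0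
      have hf0' : 0 ≤ f 0 := (hfpos 0).le
      simp only [Nat.sub_self]
      have main : ((ℓ:ℝ) - f 0) * Hk f p 0 ℓ
          ≤ f 1 * Hk f p 0 ℓ + ((ℓ:ℝ) - f 1) * Hk f p 1 ℓ := by
        nlinarith [key, h0le, hf0']
      exact mul_le_mul_of_nonneg_right main hℓ1.le
    · -- k ≥ 1 case
      rw [hp.Hk_rec hℓ hk, hp.Hk_rec hℓ (by omega)]
      rw [div_le_div_iff₀ hℓ1 hℓ1]
      have e1 : f k * Hk f p (k-1) ℓ ≤ f k * Hk f p k ℓ := by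
        apply mul_le_mul_of_nonneg_left _ (hfpos k).le
        have h5 : (k-1) + 2 ≤ ℓ := by omega
        have h6 := ihm (k-1) h5
        rwa [Nat.sub_add_cancel hk] at h6
      have e2 : ((ℓ:ℝ) - f (k+1)) * Hk f p k ℓ ≤ ((ℓ:ℝ) - f (k+1)) * Hk f p (k+1) ℓ := by
        rcases eq_or_lt_of_le hkℓ with h1 | h1
        · rw [hp.Hk_eq_zero (k := k+1) hℓ (by omega), mul_zero]
          apply mul_nonpos_of_nonpos_of_nonneg _ (ihn k)
          have h2 : ((k:ℝ)+1) ≤ f (k+1) := by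
            have h7 := (hf (k+1)).1; push_cast at h7 ⊢; linarith
          have h3 : ((ℓ:ℝ)) = (k:ℝ) + 1 := by exact_mod_cast h1.symm
          linarith
        · apply mul_le_mul_of_nonneg_left (ihm k (by omega))
          have h2 : f (k+1) ≤ ((k:ℝ)+1) + γ := by
            have h7 := (hf (k+1)).2; push_cast at h7 ⊢; linarith
          have h3 : ((k:ℝ) + 2) ≤ (ℓ:ℝ) := by exact_mod_cast h1
          linarith
      have h8 : (k+1) - 1 = k := by omega
      rw [h8]
      have main : f k * Hk f p (k-1) ℓ + ((ℓ:ℝ) - f k) * Hk f p k ℓ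
          ≤ f (k+1) * Hk f p k ℓ + ((ℓ:ℝ) - f (k+1)) * Hk f p (k+1) ℓ := by
        linarith [e1, e2]
      exact mul_le_mul_of_nonneg_right main hℓ1.le

lemma ChainLaw.sup_lemma (hp : ChainLaw f p) (hfpos : ∀ k, 0 < f k)
    (hγ0 : 0 < γ) (hγ1 : γ < 1)
    (hf : ∀ k : ℕ, (k : ℝ) ≤ f k ∧ f k ≤ (k : ℝ) + γ)
    {ℓ : ℕ} (hℓ : 1 ≤ ℓ) (k : ℕ) : Hk f p k ℓ ≤ Hk f p (ℓ-1) ℓ := by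
  obtain ⟨ihn, ihm⟩ := hp.invariant hfpos hγ0 hγ1 hf ℓ hℓ
  rcases le_or_gt ℓ k with h | h
  · rw [hp.Hk_eq_zero hℓ h]
    exact ihn (ℓ-1)
  · have : ∀ m k, k + m = ℓ - 1 → Hk f p k ℓ ≤ Hk f p (ℓ-1) ℓ := by
      intro m
      induction m with
      | zero => intro k hk; rw [← hk]; simp
      | succ m ihm2 =>
        intro k hk
        calc Hk f p k ℓ ≤ Hk f p (k+1) ℓ := ihm k (by omega)
          _ ≤ Hk f p (ℓ-1) ℓ := ihm2 (k+1) (by omega)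
    exact this (ℓ - 1 - k) k (by omega)

lemma ChainLaw.top_bound (hp : ChainLaw f p) (hfpos : ∀ k, 0 < f k)
    (hγ0 : 0 < γ) (hγ1 : γ < 1)
    (hf : ∀ k : ℕ, (k : ℝ) ≤ f k ∧ f k ≤ (k : ℝ) + γ) :
    ∀ ℓ : ℕ, 1 ≤ ℓ → Hk f p (ℓ-1) ℓ ≤
    (1 / Real.Gamma γ) * (Real.Gamma ((ℓ : ℝ) + γ) / Real.Gamma ((ℓ : ℝ) + 1)) := by
  have hΓγ : 0 < Real.Gamma γ := Real.Gamma_pos_of_pos hγ0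
  intro ℓ
  induction ℓ with
  | zero => omega
  | succ ℓ ih =>
    intro _
    rcases Nat.eq_zero_or_pos ℓ with h0 | hℓ
    · subst h0
      rw [hp.Hk_one 0, if_pos rfl]
      have h1 : (((0+1:ℕ)):ℝ) + γ = γ + 1 := by push_cast; ring
      have h2 : (((0+1:ℕ)):ℝ) + 1 = 2 := by push_cast; ring
      rw [h1, h2, Real.Gamma_add_one hγ0.ne', Real.Gamma_two]
      have hf0 : f 0 ≤ γ := by simpa using (hf 0).2
      rw [div_one]
      calc f 0 ≤ γ := hf0
        _ = 1 / Real.Gamma γ * (γ * Real.Gamma γ) := by field_simp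
    · have hs : (ℓ + 1) - 1 = ℓ := by omega
      rw [hs, hp.Hk_rec hℓ (by omega), hp.Hk_eq_zero (k := ℓ) hℓ le_rfl, mul_zero, add_zero]
      have hnn : 0 ≤ Hk f p (ℓ-1) ℓ := (hp.invariant hfpos hγ0 hγ1 hf ℓ hℓ).1 (ℓ-1)
      have ihb := ih hℓ
      have hfl : f ℓ ≤ (ℓ:ℝ) + γ := (hf ℓ).2
      have hℓγ : (0:ℝ) < (ℓ:ℝ) + γ := by
        have h9 : (0:ℝ) ≤ (ℓ:ℝ) := Nat.cast_nonneg ℓ; linarith [hγ0]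
      have hℓ1 : (0:ℝ) < (ℓ:ℝ) + 1 := by positivity
      have hΓℓ1 : 0 < Real.Gamma ((ℓ:ℝ) + 1) := Real.Gamma_pos_of_pos (by positivity)
      have step : f ℓ * Hk f p (ℓ-1) ℓ
          ≤ ((ℓ:ℝ) + γ) * ((1 / Real.Gamma γ) * (Real.Gamma ((ℓ:ℝ) + γ) / Real.Gamma ((ℓ:ℝ) + 1))) := by
        calc f ℓ * Hk f p (ℓ-1) ℓ ≤ ((ℓ:ℝ) + γ) * Hk f p (ℓ-1) ℓ :=
              mul_le_mul_of_nonneg_right hfl hnn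
          _ ≤ _ := mul_le_mul_of_nonneg_left ihb hℓγ.le
      have hGnew : Real.Gamma (((ℓ+1:ℕ):ℝ) + γ) = ((ℓ:ℝ) + γ) * Real.Gamma ((ℓ:ℝ) + γ) := by
        have : (((ℓ+1:ℕ)):ℝ) + γ = ((ℓ:ℝ) + γ) + 1 := by push_cast; ring
        rw [this, Real.Gamma_add_one hℓγ.ne']
      have hGnew2 : Real.Gamma (((ℓ+1:ℕ):ℝ) + 1) = ((ℓ:ℝ) + 1) * Real.Gamma ((ℓ:ℝ) + 1) := by
        have : (((ℓ+1:ℕ)):ℝ) + 1 = ((ℓ:ℝ) + 1) + 1 := by push_cast; ring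
        rw [this, Real.Gamma_add_one hℓ1.ne']
      rw [hGnew, hGnew2]
      rw [div_le_iff₀ hℓ1]
      calc f ℓ * Hk f p (ℓ-1) ℓ
          ≤ ((ℓ:ℝ) + γ) * ((1 / Real.Gamma γ) * (Real.Gamma ((ℓ:ℝ) + γ) / Real.Gamma ((ℓ:ℝ) + 1))) := step
        _ = 1 / Real.Gamma γ * (((ℓ:ℝ) + γ) * Real.Gamma ((ℓ:ℝ) + γ) / (((ℓ:ℝ) + 1) * Real.Gamma ((ℓ:ℝ) + 1))) * ((ℓ:ℝ) + 1) := by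
            field_simp

lemma bern (hγ0 : 0 < γ) (hγ1 : γ < 1) {x : ℝ} (hx : 1 ≤ x) :
    1 - (1-γ)/x ≤ (x/(x+1)) ^ (1-γ) := by
  have hx0 : 0 < x := lt_of_lt_of_le one_pos hx
  have hx1 : 0 < x + 1 := by linarith
  have hy : 0 < x / (x+1) := div_pos hx0 hx1
  have hs : 0 ≤ 1 - γ := by linarith [hγ1]
  rw [Real.rpow_def_of_pos hy, mul_comm (Real.log (x/(x+1))) (1-γ)]
  have hlog : -(1/x) ≤ Real.log (x/(x+1)) := by
    have h1 : Real.log (x/(x+1)) = -Real.log ((x+1)/x) := by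
      rw [Real.log_div hx0.ne' hx1.ne', Real.log_div hx1.ne' hx0.ne']
      ring
    have h2 : Real.log ((x+1)/x) ≤ (x+1)/x - 1 :=
      Real.log_le_sub_one_of_pos (div_pos hx1 hx0)
    have h3 : (x+1)/x - 1 = 1/x := by field_simp; ring
    rw [h1]
    rw [h3] at h2
    linarith
  have h4 : (1-γ) * (-(1/x)) ≤ (1-γ) * Real.log (x/(x+1)) :=
    mul_le_mul_of_nonneg_left hlog hs
  have h5 : 1 + (1-γ) * Real.log (x/(x+1)) ≤ Real.exp ((1-γ) * Real.log (x/(x+1))) := by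
    linarith [Real.add_one_le_exp ((1-γ) * Real.log (x/(x+1)))]
  have h6 : (1-γ) * (-(1/x)) = -((1-γ)/x) := by ring
  linarith [h4, h5]

lemma G_bound (hγ0 : 0 < γ) (hγ1 : γ < 1) : ∀ ℓ : ℕ, 1 ≤ ℓ →
    (1 / Real.Gamma γ) * (Real.Gamma ((ℓ : ℝ) + γ) / Real.Gamma ((ℓ : ℝ) + 1))
      ≤ ((ℓ:ℝ) + 1) ^ (γ - 1) := by
  have hΓγ : 0 < Real.Gamma γ := Real.Gamma_pos_of_pos hγ0
  intro ℓ
  induction ℓ with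
  | zero => omega
  | succ ℓ ih =>
    intro _
    rcases Nat.eq_zero_or_pos ℓ with h0 | hℓ
    · subst h0
      have h1 : (((0+1:ℕ)):ℝ) + γ = γ + 1 := by push_cast; ring
      have h2 : (((0+1:ℕ)):ℝ) + 1 = 2 := by push_cast; ring
      rw [h1, h2, Real.Gamma_add_one hγ0.ne', Real.Gamma_two, div_one]
      have hb := bern hγ0 hγ1 (x := 1) le_rfl
      norm_num at hb
      have e1 : ((1:ℝ)/2) ^ (1-γ) = 2 ^ (γ-1) := by
        rw [one_div, Real.inv_rpow (by norm_num : (0:ℝ) ≤ 2),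
          show γ-1 = -(1-γ) by ring, Real.rpow_neg (by norm_num : (0:ℝ) ≤ 2)]
      rw [← e1]
      calc 1 / Real.Gamma γ * (γ * Real.Gamma γ) = γ := by field_simp
        _ ≤ ((1:ℝ)/2) ^ (1-γ) := by
            have : (1:ℝ) - (1-γ)/1 = γ := by ring
            rw [← this]
            convert hb using 2 <;> norm_num
    · have h1 : (0:ℝ) < (ℓ:ℝ) + 1 := by positivity
      have h2 : (0:ℝ) < (ℓ:ℝ) + 2 := by positivity
      have hℓγ : (0:ℝ) < (ℓ:ℝ) + γ := by
        have h9 : (0:ℝ) ≤ (ℓ:ℝ) := Nat.cast_nonneg ℓ; linarith [hγ0]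
      have hΓℓ1 : 0 < Real.Gamma ((ℓ:ℝ) + 1) := Real.Gamma_pos_of_pos (by positivity)
      have hΓℓγ : 0 < Real.Gamma ((ℓ:ℝ) + γ) := Real.Gamma_pos_of_pos hℓγ
      have hGnew : Real.Gamma (((ℓ+1:ℕ):ℝ) + γ) = ((ℓ:ℝ) + γ) * Real.Gamma ((ℓ:ℝ) + γ) := by
        have : (((ℓ+1:ℕ)):ℝ) + γ = ((ℓ:ℝ) + γ) + 1 := by push_cast; ring
        rw [this, Real.Gamma_add_one hℓγ.ne']
      have hGnew2 : Real.Gamma (((ℓ+1:ℕ):ℝ) + 1) = ((ℓ:ℝ) + 1) * Real.Gamma ((ℓ:ℝ) + 1) := by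
        have : (((ℓ+1:ℕ)):ℝ) + 1 = ((ℓ:ℝ) + 1) + 1 := by push_cast; ring
        rw [this, Real.Gamma_add_one h1.ne']
      have hc : (((ℓ+1:ℕ)):ℝ) + 1 + 0 = (ℓ:ℝ) + 2 := by push_cast; ring
      rw [hGnew, hGnew2]
      have ihb := ih hℓ
      have eq1 : 1 / Real.Gamma γ * (((ℓ:ℝ) + γ) * Real.Gamma ((ℓ:ℝ) + γ)
            / (((ℓ:ℝ) + 1) * Real.Gamma ((ℓ:ℝ) + 1)))
          = (((ℓ:ℝ) + γ)/((ℓ:ℝ)+1)) * (1 / Real.Gamma γ * (Real.Gamma ((ℓ:ℝ) + γ) / Real.Gamma ((ℓ:ℝ) + 1))) := by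
        field_simp
      have hb := bern hγ0 hγ1 (x := (ℓ:ℝ)+1) (by have h10 : (1:ℝ) ≤ (ℓ:ℝ) := Nat.one_le_cast.mpr hℓ; linarith)
      have hco : ((ℓ:ℝ) + γ)/((ℓ:ℝ)+1) = 1 - (1-γ)/((ℓ:ℝ)+1) := by field_simp; ring
      have hrp1 : (0:ℝ) ≤ ((ℓ:ℝ)+1) ^ (γ-1) := Real.rpow_nonneg h1.le _
      have key2 : (((ℓ:ℝ) + γ)/((ℓ:ℝ)+1)) * (1 / Real.Gamma γ * (Real.Gamma ((ℓ:ℝ) + γ) / Real.Gamma ((ℓ:ℝ) + 1)))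
          ≤ ((((ℓ:ℝ)+1)/((ℓ:ℝ)+2)) ^ (1-γ)) * (((ℓ:ℝ)+1) ^ (γ-1)) := by
        have c0 : (0:ℝ) ≤ ((ℓ:ℝ) + γ)/((ℓ:ℝ)+1) := le_of_lt (div_pos hℓγ h1)
        calc (((ℓ:ℝ) + γ)/((ℓ:ℝ)+1)) * (1 / Real.Gamma γ * (Real.Gamma ((ℓ:ℝ) + γ) / Real.Gamma ((ℓ:ℝ) + 1)))
            ≤ (((ℓ:ℝ) + γ)/((ℓ:ℝ)+1)) * (((ℓ:ℝ)+1) ^ (γ-1)) := mul_le_mul_of_nonneg_left ihb c0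
          _ ≤ ((((ℓ:ℝ)+1)/((ℓ:ℝ)+2)) ^ (1-γ)) * (((ℓ:ℝ)+1) ^ (γ-1)) := by
              apply mul_le_mul_of_nonneg_right _ hrp1
              rw [hco]
              have : (ℓ:ℝ) + 1 + 1 = (ℓ:ℝ) + 2 := by ring
              rw [← this]
              exact hb
      have e2 : ((((ℓ:ℝ)+1)/((ℓ:ℝ)+2)) ^ (1-γ)) * (((ℓ:ℝ)+1) ^ (γ-1)) = ((ℓ:ℝ)+2) ^ (γ-1) := by
        have n1 : (0:ℝ) < ((ℓ:ℝ)+1) ^ (1-γ) := Real.rpow_pos_of_pos h1 _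
        have n2 : (0:ℝ) < ((ℓ:ℝ)+2) ^ (1-γ) := Real.rpow_pos_of_pos h2 _
        rw [Real.div_rpow h1.le h2.le, show γ-1 = -(1-γ) by ring,
          Real.rpow_neg h2.le, Real.rpow_neg h1.le]
        field_simp
      have hcast : (((ℓ+1:ℕ)):ℝ) + 1 = (ℓ:ℝ) + 2 := by push_cast; ring
      rw [hcast, eq1, ← e2]
      exact key2

end AuxLemmas

/-- if `f k ∈ [k, k+γ]` for all `k`, with `γ ∈ (0,1)`, then
`sup_k h(k,ℓ) = h(ℓ-1,ℓ) ≤ Γ(ℓ+γ)/(Γ(γ) Γ(ℓ+1))` for every `ℓ ≥ 1`, and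
consequently `sup_k h(k,ℓ) ≤ C ℓ^{γ-1}` for some constant `C > 0`. -/
theorem Hk_bound_stretched (f : ℕ → ℝ) (hfpos : ∀ k, 0 < f k)
    (γ : ℝ) (hγ0 : 0 < γ) (hγ1 : γ < 1)
    (hf : ∀ k : ℕ, (k : ℝ) ≤ f k ∧ f k ≤ (k : ℝ) + γ)
    (p : ℕ → ℕ → ℝ) (hp : ChainLaw f p) :
    (∀ ℓ, 1 ≤ ℓ →
      (∀ k, Hk f p k ℓ ≤ Hk f p (ℓ - 1) ℓ) ∧
      Hk f p (ℓ - 1) ℓ ≤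
        (1 / Real.Gamma γ) * (Real.Gamma ((ℓ : ℝ) + γ) / Real.Gamma ((ℓ : ℝ) + 1))) ∧
    ∃ C > 0, ∀ ℓ : ℕ, 1 ≤ ℓ → ∀ k, Hk f p k ℓ ≤ C * (ℓ : ℝ) ^ (γ - 1) := by
  constructor
  · intro ℓ hℓ
    exact ⟨hp.sup_lemma hfpos hγ0 hγ1 hf hℓ, hp.top_bound hfpos hγ0 hγ1 hf ℓ hℓ⟩
  · refine ⟨1, one_pos, fun ℓ hℓ k => ?_⟩
    have hℓ0 : (0:ℝ) < (ℓ:ℝ) := by exact_mod_cast hℓ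
    calc Hk f p k ℓ ≤ Hk f p (ℓ-1) ℓ := hp.sup_lemma hfpos hγ0 hγ1 hf hℓ k
      _ ≤ (1 / Real.Gamma γ) * (Real.Gamma ((ℓ : ℝ) + γ) / Real.Gamma ((ℓ : ℝ) + 1)) :=
          hp.top_bound hfpos hγ0 hγ1 hf ℓ hℓ
      _ ≤ ((ℓ:ℝ) + 1) ^ (γ - 1) := G_bound hγ0 hγ1 ℓ hℓ
      _ ≤ ((ℓ:ℝ)) ^ (γ - 1) :=
          Real.rpow_le_rpow_of_nonpos hℓ0 (by linarith) (by linarith)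
      _ = 1 * ((ℓ:ℝ)) ^ (γ - 1) := (one_mul _).symm
end
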